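/- There exists an absolute constant C > 0 such that for every real λ ≥ 0 and all integers a, b ≥ 2, with g(k) := k·√(min(k,a)·min(k,b))·1{k ≥ 4}, one has E_λ[g] ≥ C · min( λ·√(min(λ,a)·min(λ,b)), λ⁴ ). -/

import Mathlib

noncomputable def pois (lam : ℝ) (k : ℕ) : ℝ := Real.exp (-lam) * lam ^ k / (Nat.factorial k)

lemma hasSum_pois (lam : ℝ) : HasSum (pois lam) 1 := by
  have h := NormedSpace.expSeries_div_hasSum_exp lam
  rw [← Real.exp_eq_exp_ℝ] at h
  have h2 := h.mul_left (Real.exp (-lam))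
  have he : Real.exp (-lam) * Real.exp lam = 1 := by rw [← Real.exp_add]; simp
  rw [he] at h2
  convert h2 using 2 with k
  · rfl
  simp [pois, mul_div_assoc]

lemma hasSum_pois_k (lam : ℝ) : HasSum (fun k : ℕ => pois lam k * k) lam := by
  have h := (hasSum_pois lam).mul_left lam
  have heq : (fun k : ℕ => lam * pois lam k)
      = fun k : ℕ => (fun n : ℕ => pois lam n * n) (k + 1) := by
    funext k
    have hk : (Nat.factorial k : ℝ) ≠ 0 := Nat.cast_ne_zero.mpr k.factorial_ne_zero
    simp only [pois, Nat.factorial_succ]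
    push_cast
    field_simp
    ring
  rw [heq] at h
  rw [hasSum_nat_add_iff (f := fun n : ℕ => pois lam n * n) 1] at h
  simpa [pois] using h

/-- Expectation of `f` under a Poisson distribution with parameter `lam`. -/
noncomputable def poissonE (lam : ℝ) (f : ℕ → ℝ) : ℝ :=
  ∑' k : ℕ, Real.exp (-lam) * lam ^ k / (Nat.factorial k) * f k

lemma poissonE_eq (lam : ℝ) (f : ℕ → ℝ) : poissonE lam f = ∑' k : ℕ, pois lam k * f k := rfl

theorem stmt5 : ∃ C : ℝ, 0 < C ∧ ∀ (lam : ℝ) (a b : ℤ), 0 ≤ lam → 2 ≤ a → 2 ≤ b →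
    poissonE lam (fun k => (k : ℝ) * Real.sqrt (min (k : ℝ) (a : ℝ) * min (k : ℝ) (b : ℝ)) *
        (if 4 ≤ k then 1 else 0))
    ≥ C * min (lam * Real.sqrt (min lam (a : ℝ) * min lam (b : ℝ))) (lam ^ 4) := by
  refine ⟨1/20000, by norm_num, fun lam a b hlam ha hb => ?_⟩
  have ha2 : (2:ℝ) ≤ (a:ℝ) := by exact_mod_cast ha
  have hb2 : (2:ℝ) ≤ (b:ℝ) := by exact_mod_cast hb
  set g : ℕ → ℝ := fun k => (k : ℝ) * Real.sqrt (min (k:ℝ) (a:ℝ) * min (k:ℝ) (b:ℝ)) *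
      (if 4 ≤ k then (1:ℝ) else 0) with hg
  rw [poissonE_eq]
  have hpnn : ∀ k : ℕ, 0 ≤ pois lam k := fun k => by
    unfold pois; positivity
  have hindnn : ∀ k : ℕ, (0:ℝ) ≤ (if 4 ≤ k then (1:ℝ) else 0) := fun k => by
    split <;> norm_num
  have hindle : ∀ k : ℕ, (if 4 ≤ k then (1:ℝ) else 0) ≤ 1 := fun k => by
    split <;> norm_num
  have hgnn : ∀ k : ℕ, 0 ≤ g k := fun k =>
    mul_nonneg (mul_nonneg k.cast_nonneg (Real.sqrt_nonneg _)) (hindnn k)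
  have hminknn : ∀ (k : ℕ) (c : ℝ), 2 ≤ c → (0:ℝ) ≤ min (k:ℝ) c := fun k c hc =>
    le_min k.cast_nonneg (by linarith)
  -- upper bound for summability
  have hgle : ∀ k : ℕ, g k ≤ Real.sqrt ((a:ℝ) * (b:ℝ)) * k := by
    intro k
    have h1 : Real.sqrt (min (k:ℝ) (a:ℝ) * min (k:ℝ) (b:ℝ)) ≤ Real.sqrt ((a:ℝ)*(b:ℝ)) :=
      Real.sqrt_le_sqrt (mul_le_mul (min_le_right _ _) (min_le_right _ _)
        (hminknn k _ hb2) (by linarith))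
    calc g k ≤ (k:ℝ) * Real.sqrt (min (k:ℝ) (a:ℝ) * min (k:ℝ) (b:ℝ)) * 1 :=
          mul_le_mul_of_nonneg_left (hindle k)
            (mul_nonneg k.cast_nonneg (Real.sqrt_nonneg _))
      _ = (k:ℝ) * Real.sqrt (min (k:ℝ) (a:ℝ) * min (k:ℝ) (b:ℝ)) := by ring
      _ ≤ (k:ℝ) * Real.sqrt ((a:ℝ)*(b:ℝ)) := mul_le_mul_of_nonneg_left h1 k.cast_nonneg
      _ = Real.sqrt ((a:ℝ)*(b:ℝ)) * k := by ring
  have hsum : Summable (fun k : ℕ => pois lam k * g k) := by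
    refine Summable.of_nonneg_of_le (fun k => mul_nonneg (hpnn k) (hgnn k))
      (fun k => ?_) ((hasSum_pois_k lam).summable.mul_left (Real.sqrt ((a:ℝ)*(b:ℝ))))
    calc pois lam k * g k ≤ pois lam k * (Real.sqrt ((a:ℝ)*(b:ℝ)) * k) :=
          mul_le_mul_of_nonneg_left (hgle k) (hpnn k)
      _ = Real.sqrt ((a:ℝ)*(b:ℝ)) * (pois lam k * k) := by ring
  rcases le_total lam 8 with hl | hl
  · -- small lam: use the k = 4 term
    have key := Summable.le_tsum hsum 4 (fun j _ => mul_nonneg (hpnn j) (hgnn j))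
    have hsqrt4 : (2:ℝ) ≤ Real.sqrt (min (4:ℝ) (a:ℝ) * min (4:ℝ) (b:ℝ)) := by
      have h2 : Real.sqrt 4 = 2 := by
        rw [show (4:ℝ) = 2^2 by norm_num, Real.sqrt_sq (by norm_num)]
      rw [← h2]
      apply Real.sqrt_le_sqrt
      have := le_min (show (2:ℝ) ≤ 4 by norm_num) ha2
      have := le_min (show (2:ℝ) ≤ 4 by norm_num) hb2
      nlinarith
    have hg4 : (8:ℝ) ≤ g 4 := by
      simp only [hg]
      norm_num
      nlinarith
    have hexp : (1:ℝ)/6561 ≤ Real.exp (-lam) := by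
      have h8 : Real.exp 8 ≤ 6561 := by
        have h1 : Real.exp 1 ≤ 3 := le_of_lt (lt_trans Real.exp_one_lt_d9 (by norm_num))
        calc Real.exp 8 = Real.exp 1 ^ (8:ℕ) := by
              rw [← Real.exp_nat_mul]; norm_num
          _ ≤ 3 ^ (8:ℕ) := pow_le_pow_left₀ (Real.exp_nonneg 1) h1 8
          _ = 6561 := by norm_num
      have hmono : Real.exp (-8) ≤ Real.exp (-lam) := Real.exp_le_exp.mpr (by linarith)
      have : (1:ℝ)/6561 ≤ Real.exp (-8) := by
        rw [Real.exp_neg]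
        rw [div_le_iff₀ (by norm_num)]
        rw [inv_mul_eq_div, le_div_iff₀ (Real.exp_pos 8)]
        linarith
      linarith
    have hp4 : lam^4 / 157464 ≤ pois lam 4 := by
      unfold pois
      have : (Nat.factorial 4 : ℝ) = 24 := by norm_num [Nat.factorial]
      rw [this]
      rw [div_le_div_iff₀ (by norm_num) (by norm_num)]
      have hl4 : (0:ℝ) ≤ lam^4 := by positivity
      nlinarith
    have hterm : lam^4 / 20000 ≤ pois lam 4 * g 4 := by
      have h1 : lam^4 / 157464 * 8 ≤ pois lam 4 * g 4 :=
        mul_le_mul hp4 hg4 (by norm_num) (hpnn 4)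
      have hl4 : (0:ℝ) ≤ lam^4 := by positivity
      nlinarith
    have hminle : min (lam * Real.sqrt (min lam (a:ℝ) * min lam (b:ℝ))) (lam^4) ≤ lam^4 :=
      min_le_right _ _
    calc (1/20000 : ℝ) * min (lam * Real.sqrt (min lam (a:ℝ) * min lam (b:ℝ))) (lam^4)
        ≤ (1/20000) * lam^4 := by nlinarith
      _ = lam^4 / 20000 := by ring
      _ ≤ pois lam 4 * g 4 := hterm
      _ ≤ ∑' k : ℕ, pois lam k * g k := key
  · -- large lam
    have hlam0 : (0:ℝ) < lam := by linarith
    set s := Real.sqrt (min lam (a:ℝ) * min lam (b:ℝ)) with hs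
    have hs0 : (0:ℝ) ≤ s := Real.sqrt_nonneg _
    have hpt : ∀ k : ℕ, pois lam k * ((s/lam) * (lam * k - lam^2/4 - 9)) ≤ pois lam k * g k := by
      intro k
      apply mul_le_mul_of_nonneg_left _ (hpnn k)
      set t := min (k:ℝ) lam / lam with ht
      have ht0 : 0 ≤ t := div_nonneg (le_min k.cast_nonneg hlam0.le) hlam0.le
      have ht1 : t ≤ 1 := by
        rw [ht, div_le_one hlam0]; exact min_le_right _ _
      have hminc : ∀ c : ℝ, 2 ≤ c → t * min lam c ≤ min (k:ℝ) c := by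
        intro c hc
        have hmlc1 : min lam c ≤ lam := min_le_left _ _
        have hmlc2 : min lam c ≤ c := min_le_right _ _
        have hmlc0 : 0 ≤ min lam c := le_min hlam0.le (by linarith)
        apply le_min
        · rcases le_total (k:ℝ) lam with h | h
          · have : t = (k:ℝ)/lam := by rw [ht, min_eq_left h]
            rw [this]
            rw [div_mul_eq_mul_div, div_le_iff₀ hlam0]
            nlinarith [Nat.cast_nonneg (α := ℝ) k]
          · have : t = 1 := by rw [ht, min_eq_right h, div_self hlam0.ne']
            rw [this]; linarith
        · nlinarith
      have key1 : t * s ≤ Real.sqrt (min (k:ℝ) (a:ℝ) * min (k:ℝ) (b:ℝ)) := by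
        have heq : t * s = Real.sqrt (t^2 * (min lam (a:ℝ) * min lam (b:ℝ))) := by
          rw [Real.sqrt_mul (sq_nonneg _), Real.sqrt_sq ht0]
        rw [heq]
        apply Real.sqrt_le_sqrt
        have h1 := hminc (a:ℝ) ha2
        have h2 := hminc (b:ℝ) hb2
        have hma0 : 0 ≤ t * min lam (a:ℝ) :=
          mul_nonneg ht0 (le_min hlam0.le (by linarith))
        have hmb0 : 0 ≤ t * min lam (b:ℝ) :=
          mul_nonneg ht0 (le_min hlam0.le (by linarith))
        calc t^2 * (min lam (a:ℝ) * min lam (b:ℝ))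
            = (t * min lam (a:ℝ)) * (t * min lam (b:ℝ)) := by ring
          _ ≤ min (k:ℝ) (a:ℝ) * min (k:ℝ) (b:ℝ) :=
            mul_le_mul h1 h2 hmb0 (hminknn k _ ha2)
      have key2 : (s/lam) * ((k:ℝ) * min (k:ℝ) lam * (if 4 ≤ k then (1:ℝ) else 0)) ≤ g k := by
        have hstep : (s/lam) * ((k:ℝ) * min (k:ℝ) lam) = (k:ℝ) * (t * s) := by
          rw [ht]; field_simp
        calc (s/lam) * ((k:ℝ) * min (k:ℝ) lam * (if 4 ≤ k then (1:ℝ) else 0))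
            = ((k:ℝ) * (t * s)) * (if 4 ≤ k then (1:ℝ) else 0) := by rw [← hstep]; ring
          _ ≤ ((k:ℝ) * Real.sqrt (min (k:ℝ) (a:ℝ) * min (k:ℝ) (b:ℝ))) *
              (if 4 ≤ k then (1:ℝ) else 0) := by
            apply mul_le_mul_of_nonneg_right _ (hindnn k)
            exact mul_le_mul_of_nonneg_left key1 k.cast_nonneg
          _ = g k := by rw [hg]
      have key3 : lam * k - lam^2/4 - 9 ≤ (k:ℝ) * min (k:ℝ) lam * (if 4 ≤ k then (1:ℝ) else 0) := by
        by_cases h4 : 4 ≤ k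
        · rw [if_pos h4, mul_one]
          rcases le_total (k:ℝ) lam with h | h
          · rw [min_eq_left h]; nlinarith [sq_nonneg ((k:ℝ) - lam/2)]
          · rw [min_eq_right h]; nlinarith
        · rw [if_neg h4, mul_zero]
          have hk3 : (k:ℝ) ≤ 3 := by
            have : k ≤ 3 := Nat.lt_succ_iff.mp (Nat.lt_of_not_le h4)
            exact_mod_cast this
          nlinarith [sq_nonneg (lam/2 - 3), Nat.cast_nonneg (α := ℝ) k]
      calc (s/lam) * (lam * k - lam^2/4 - 9)
          ≤ (s/lam) * ((k:ℝ) * min (k:ℝ) lam * (if 4 ≤ k then (1:ℝ) else 0)) :=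
            mul_le_mul_of_nonneg_left key3 (div_nonneg hs0 hlam0.le)
        _ ≤ g k := key2
    -- sum of the lower-bound series
    set c2 : ℝ := -((s/lam) * (lam^2/4 + 9)) with hc2
    have hrw : (fun k : ℕ => pois lam k * ((s/lam) * (lam * k - lam^2/4 - 9)))
        = fun k : ℕ => s * (pois lam k * k) + c2 * pois lam k := by
      funext k
      rw [hc2]
      field_simp
      ring
    have hHS : HasSum (fun k : ℕ => pois lam k * ((s/lam) * (lam * k - lam^2/4 - 9)))
        (s * lam + c2 * 1) := by
      rw [hrw]
      exact ((hasSum_pois_k lam).mul_left s).add ((hasSum_pois lam).mul_left c2)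
    have hcomp := Summable.tsum_le_tsum hpt hHS.summable hsum
    rw [hHS.tsum_eq] at hcomp
    have hlow : lam * s / 2 ≤ s * lam + c2 * 1 := by
      rw [hc2]
      have h1 : (s/lam) * (lam^2/4 + 9) ≤ s * lam / 2 := by
        rw [div_mul_eq_mul_div, div_le_div_iff₀ hlam0 (by norm_num)]
        nlinarith [mul_nonneg hs0 (show (0:ℝ) ≤ lam^2/4 - 9 by nlinarith)]
      linarith
    have hminle : min (lam * s) (lam^4) ≤ lam * s := min_le_left _ _
    have hmin0 : 0 ≤ min (lam * s) (lam^4) :=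
      le_min (mul_nonneg hlam0.le hs0) (by positivity)
    calc (1/20000 : ℝ) * min (lam * s) (lam^4)
        ≤ (1/2) * (lam * s) := by nlinarith
      _ = lam * s / 2 := by ring
      _ ≤ s * lam + c2 * 1 := hlow
      _ ≤ ∑' k : ℕ, pois lam k * g k := hcomp
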